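/- arXiv:2106.11355 — 3 statements merged into one kernel-verified Lean document; each statement's English description precedes it below -/
import Mathlib

section
/- Conversely to the pH parametrization: for any matrices E, J, R ∈ ℝ^(n×n), B, P ∈ ℝ^(n×m), S, N ∈ ℝ^(m×m) satisfying the pH constraints (E ⪰ 0, J = −J^T, N = −N^T, W := [[R,P],[P^T,S]] ⪰ 0), there exists a parameter vector θ ∈ ℝ^(n_θ) with n_θ = n(3n+1)/2 + 2nm + m² such that E = vtu(θ_E)^T vtu(θ_E), J = vtsu(θ_J)^T − vtsu(θ_J), W = vtu(θ_W)^T vtu(θ_W), B = vtf_m(θ_B), and N = vtsu(θ_N)^T − vtsu(θ_N). -/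
open Matrix

/-- Row-wise index into the upper-triangular part. -/
def uidx (n i j : ℕ) : ℕ := i * n - i * (i - 1) / 2 + (j - i)

/-- `vtu` maps a vector of length `n(n+1)/2` row-wise to an `n × n`
upper triangular matrix. -/
def vtu (n : ℕ) (v : Fin (n * (n + 1) / 2) → ℝ) : Matrix (Fin n) (Fin n) ℝ :=
  fun i j => if i ≤ j then
    (if h : uidx n i.val j.val < n * (n + 1) / 2 then v ⟨_, h⟩ else 0) else 0

/-- Row-wise index into the strictly upper-triangular part. -/
def sidx (n i j : ℕ) : ℕ := i * (n - 1) - i * (i - 1) / 2 + (j - i - 1)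

/-- `vtsu` maps a vector of length `n(n-1)/2` row-wise to an `n × n`
strictly upper triangular matrix. -/
def vtsu (n : ℕ) (v : Fin (n * (n - 1) / 2) → ℝ) : Matrix (Fin n) (Fin n) ℝ :=
  fun i j => if i < j then
    (if h : sidx n i.val j.val < n * (n - 1) / 2 then v ⟨_, h⟩ else 0) else 0

/-- `vtf` reshapes a vector of length `n·m` column-wise into an `n × m` matrix. -/
def vtf (n m : ℕ) (v : Fin (n * m) → ℝ) : Matrix (Fin n) (Fin m) ℝ :=
  fun i j => if h : j.val * n + i.val < n * m then v ⟨_, h⟩ else 0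

/-- Top-left `n × n` block of an `(n+m) × (n+m)` matrix. -/
def blk11 (n m : ℕ) (W : Matrix (Fin (n + m)) (Fin (n + m)) ℝ) :
    Matrix (Fin n) (Fin n) ℝ :=
  fun i j => W (Fin.castAdd m i) (Fin.castAdd m j)

/-- Top-right `n × m` block of an `(n+m) × (n+m)` matrix. -/
def blk12 (n m : ℕ) (W : Matrix (Fin (n + m)) (Fin (n + m)) ℝ) :
    Matrix (Fin n) (Fin m) ℝ :=
  fun i j => W (Fin.castAdd m i) (Fin.natAdd n j)

/-- Bottom-right `m × m` block of an `(n+m) × (n+m)` matrix. -/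
def blk22 (n m : ℕ) (W : Matrix (Fin (n + m)) (Fin (n + m)) ℝ) :
    Matrix (Fin m) (Fin m) ℝ :=
  fun i j => W (Fin.natAdd n i) (Fin.natAdd n j)


namespace PHaux




/-- `g m i = i*m - i*(i-1)/2`, the row-start offset. -/
def g (m i : ℕ) : ℕ := i * m - i * (i - 1) / 2

lemma two_dvd_mul_pred (i : ℕ) : 2 ∣ i * (i - 1) := by
  cases i with
  | zero => simp
  | succ k =>
    simpa [Nat.succ_sub_one, mul_comm] using (Nat.even_mul_succ_self k).two_dvd

lemma gstep (m i : ℕ) (h : i < m) : g m (i + 1) = g m i + (m - i) := by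
  unfold g
  simp only [Nat.add_sub_cancel]
  have h1 : 2 ∣ i * (i - 1) := two_dvd_mul_pred i
  have h2 : 2 ∣ (i + 1) * i := by
    simpa [mul_comm] using (Nat.even_mul_succ_self i).two_dvd
  have h3 : (i + 1) * i = i * (i - 1) + 2 * i := by
    cases i with
    | zero => simp
    | succ k => simp [Nat.succ_sub_one]; ring
  have h4 : i * (i - 1) ≤ i * m := Nat.mul_le_mul_left _ (by omega)
  have h5 : (i + 1) * m = i * m + m := by ring
  omega

lemma g_le (m : ℕ) : ∀ j, j ≤ m → ∀ i, i ≤ j → g m i ≤ g m j := by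
  intro j
  induction j with
  | zero =>
    intro _ i hi
    have : i = 0 := by omega
    subst this; exact le_rfl
  | succ k ih =>
    intro hk i hi
    rcases Nat.lt_or_ge i (k + 1) with h | h
    · have := ih (by omega) i (by omega)
      rw [gstep m k (by omega)]
      omega
    · have : i = k + 1 := by omega
      subst this; exact le_rfl

lemma g_self (m : ℕ) : g m m = m * (m + 1) / 2 := by
  unfold g
  have h1 : 2 ∣ m * (m - 1) := two_dvd_mul_pred m
  have h2 : 2 ∣ m * (m + 1) := (Nat.even_mul_succ_self m).two_dvd
  have h3 : m * (m + 1) = m * (m - 1) + 2 * m := by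
    cases m with
    | zero => simp
    | succ k => simp [Nat.succ_sub_one]; ring
  have h4 : m * (m - 1) ≤ m * m := Nat.mul_le_mul_left _ (by omega)
  have h5 : m * (m + 1) = m * m + m := by ring
  omega

lemma g_add_lt (m i d : ℕ) (hi : i < m) (hd : d < m - i) :
    g m i + d < m * (m + 1) / 2 := by
  have h1 := gstep m i hi
  have h2 := g_le m m le_rfl (i + 1) (by omega)
  have h3 := g_self m
  omega

lemma g_add_inj {m i i' d d' : ℕ} (hi : i < m) (hi' : i' < m)
    (hd : d < m - i) (hd' : d' < m - i')
    (h : g m i + d = g m i' + d') : i = i' ∧ d = d' := by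
  have key : ∀ a b e e', a < m → b < m → e < m - a → a < b →
      g m a + e < g m b + e' := by
    intro a b e e' ha hb he hab
    have h1 := gstep m a ha
    have h2 := g_le m b (by omega) (a + 1) (by omega)
    omega
  rcases Nat.lt_trichotomy i i' with hlt | heq | hgt
  · exact absurd h (Nat.ne_of_lt (key i i' d d' hi hi' hd hlt))
  · subst heq; omega
  · exact absurd h.symm (Nat.ne_of_lt (key i' i d' d hi' hi hd' hgt))


-- uidx facts
lemma uidx_eq (n i j : ℕ) : uidx n i j = g n i + (j - i) := rfl

lemma uidx_lt {n i j : ℕ} (hij : i ≤ j) (hj : j < n) :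
    uidx n i j < n * (n + 1) / 2 := by
  rw [uidx_eq]
  exact g_add_lt n i (j - i) (by omega) (by omega)

lemma uidx_inj {n i j i' j' : ℕ} (hij : i ≤ j) (hj : j < n)
    (hij' : i' ≤ j') (hj' : j' < n)
    (h : uidx n i j = uidx n i' j') : i = i' ∧ j = j' := by
  rw [uidx_eq, uidx_eq] at h
  have := g_add_inj (m := n) (by omega) (by omega) (by omega) (by omega) h
  omega

lemma sidx_eq (n i j : ℕ) : sidx n i j = g (n - 1) i + (j - i - 1) := rfl

lemma sidx_lt {n i j : ℕ} (hij : i < j) (hj : j < n) :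
    sidx n i j < n * (n - 1) / 2 := by
  rw [sidx_eq]
  have h := g_add_lt (n - 1) i (j - i - 1) (by omega) (by omega)
  have : (n - 1) * (n - 1 + 1) = n * (n - 1) := by
    cases n with
    | zero => simp
    | succ k => simp [Nat.succ_sub_one]; ring
  omega

lemma sidx_inj {n i j i' j' : ℕ} (hij : i < j) (hj : j < n)
    (hij' : i' < j') (hj' : j' < n)
    (h : sidx n i j = sidx n i' j') : i = i' ∧ j = j' := by
  rw [sidx_eq, sidx_eq] at h
  have := g_add_inj (m := n - 1) (by omega) (by omega) (by omega) (by omega) h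
  omega

-- surjectivity of vtu onto upper-triangular matrices
lemma vtu_surj (n : ℕ) (U : Matrix (Fin n) (Fin n) ℝ)
    (hU : ∀ i j : Fin n, ¬ i ≤ j → U i j = 0) :
    ∃ v, vtu n v = U := by
  classical
  refine ⟨fun k =>
    if h : ∃ p : Fin n × Fin n, p.1 ≤ p.2 ∧ uidx n p.1.val p.2.val = k.val
    then U h.choose.1 h.choose.2 else 0, ?_⟩
  funext i j
  show (if i ≤ j then _ else (0:ℝ)) = U i j
  by_cases hij : i ≤ j
  · rw [if_pos hij]
    have hlt : uidx n i.val j.val < n * (n + 1) / 2 := uidx_lt hij j.isLt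
    rw [dif_pos hlt]
    have hex : ∃ p : Fin n × Fin n, p.1 ≤ p.2 ∧
        uidx n p.1.val p.2.val = uidx n i.val j.val := ⟨(i, j), hij, rfl⟩
    simp only [dif_pos hex]
    obtain ⟨h1, h2⟩ := hex.choose_spec
    obtain ⟨e1, e2⟩ := uidx_inj h1 hex.choose.2.isLt hij j.isLt h2
    have : ∀ a b : Fin n, a.val = i.val → b.val = j.val → U a b = U i j := by
      intro a b ha hb
      congr 1 <;> exact Fin.ext ‹_›
    exact this _ _ e1 e2
  · rw [if_neg hij]
    exact (hU i j hij).symm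

lemma vtsu_surj (n : ℕ) (A : Matrix (Fin n) (Fin n) ℝ)
    (hA : ∀ i j : Fin n, ¬ i < j → A i j = 0) :
    ∃ v, vtsu n v = A := by
  classical
  refine ⟨fun k =>
    if h : ∃ p : Fin n × Fin n, p.1 < p.2 ∧ sidx n p.1.val p.2.val = k.val
    then A h.choose.1 h.choose.2 else 0, ?_⟩
  funext i j
  show (if i < j then _ else (0:ℝ)) = A i j
  by_cases hij : i < j
  · rw [if_pos hij]
    have hlt : sidx n i.val j.val < n * (n - 1) / 2 := sidx_lt hij j.isLt
    rw [dif_pos hlt]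
    have hex : ∃ p : Fin n × Fin n, p.1 < p.2 ∧
        sidx n p.1.val p.2.val = sidx n i.val j.val := ⟨(i, j), hij, rfl⟩
    simp only [dif_pos hex]
    obtain ⟨h1, h2⟩ := hex.choose_spec
    obtain ⟨e1, e2⟩ := sidx_inj h1 hex.choose.2.isLt hij j.isLt h2
    have : ∀ a b : Fin n, a.val = i.val → b.val = j.val → A a b = A i j := by
      intro a b ha hb
      congr 1 <;> exact Fin.ext ‹_›
    exact this _ _ e1 e2
  · rw [if_neg hij]
    exact (hA i j hij).symm

lemma vtf_surj (n m : ℕ) (B : Matrix (Fin n) (Fin m) ℝ) :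
    ∃ v, vtf n m v = B := by
  rcases Nat.eq_zero_or_pos n with hn | hn
  · subst hn
    exact ⟨fun _ => 0, by funext i j; exact i.elim0⟩
  refine ⟨fun k => B ⟨k.val % n, Nat.mod_lt _ hn⟩
      ⟨k.val / n, by
        have := k.isLt
        exact Nat.div_lt_of_lt_mul (by omega)⟩, ?_⟩
  funext i j
  show dite _ _ _ = B i j
  have hlt : j.val * n + i.val < n * m := by
    have hj : j.val + 1 ≤ m := j.isLt
    have : (j.val + 1) * n ≤ m * n := Nat.mul_le_mul_right _ hj
    have hi := i.isLt
    have hcomm : n * m = m * n := Nat.mul_comm n m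
    have : j.val * n + i.val < (j.val + 1) * n := by
      have : (j.val + 1) * n = j.val * n + n := by ring
      omega
    omega
  simp only [dif_pos hlt]
  have e1 : (j.val * n + i.val) % n = i.val := by
    rw [add_comm, Nat.add_mul_mod_self_right, Nat.mod_eq_of_lt i.isLt]
  have e2 : (j.val * n + i.val) / n = j.val := by
    rw [add_comm, Nat.add_mul_div_right _ _ hn, Nat.div_eq_of_lt i.isLt, zero_add]
  have : ∀ (a : Fin n) (b : Fin m), a.val = i.val → b.val = j.val → B a b = B i j := by
    intro a b ha hb
    congr 1 <;> exact Fin.ext ‹_›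
  exact this _ _ e1 e2


lemma psd_cholesky {n : ℕ} {E : Matrix (Fin n) (Fin n) ℝ} (hE : E.PosSemidef) :
    ∃ U : Matrix (Fin n) (Fin n) ℝ,
      (∀ i j : Fin n, ¬ i ≤ j → U i j = 0) ∧ E = Uᵀ * U := by
  classical
  obtain ⟨M, hMM, hMh⟩ : ∃ M : Matrix (Fin n) (Fin n) ℝ, M * M = E ∧ Mᵀ = M := by
    open scoped MatrixOrder in
    exact ⟨CFC.sqrt E, CFC.sqrt_mul_sqrt_self E hE.nonneg,
      (CFC.sqrt_nonneg E).posSemidef.isHermitian⟩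
  set f : Fin n → EuclideanSpace ℝ (Fin n) := fun j => WithLp.toLp 2 fun i => M i j with hf
  have hcard : Module.finrank ℝ (EuclideanSpace ℝ (Fin n)) = Fintype.card (Fin n) := by
    simp
  have wf : WellFoundedLT (Fin n) := ⟨Finite.wellFounded_of_trans_of_irrefl _⟩
  let b := InnerProductSpace.gramSchmidtOrthonormalBasis hcard f
  have htri : ∀ i j : Fin n, i < j → (inner ℝ (b j) (f i) : ℝ) = 0 := fun i j hij =>
    InnerProductSpace.gramSchmidtOrthonormalBasis_inv_triangular hcard f hij
  refine ⟨Matrix.of fun k j => (inner ℝ (b k) (f j) : ℝ), ?_, ?_⟩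
  · intro i j hij
    exact htri j i (lt_of_not_ge hij)
  · funext i j
    rw [Matrix.mul_apply]
    symm
    have key := b.sum_inner_mul_inner (f i) (f j)
    have hfE : (inner ℝ (f i) (f j) : ℝ) = E i j := by
      rw [← hMM]
      simp only [hf, PiLp.inner_apply, RCLike.inner_apply, Matrix.mul_apply,
        starRingEnd_apply, star_trivial]
      apply Finset.sum_congr rfl
      intro k _
      have h := congrFun (congrFun hMh i) k
      simp only [Matrix.transpose_apply] at h
      show M k j * M k i = M i k * M k j
      rw [h, mul_comm]
    calc ∑ k, (Matrix.of fun k j => (inner ℝ (b k) (f j) : ℝ))ᵀ i k *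
          (Matrix.of fun k j => (inner ℝ (b k) (f j) : ℝ)) k j
        = ∑ k, (inner ℝ (f i) (b k) : ℝ) * inner ℝ (b k) (f j) := by
          apply Finset.sum_congr rfl
          intro k _
          rw [Matrix.transpose_apply, Matrix.of_apply, Matrix.of_apply,
            real_inner_comm (b k) (f i)]
      _ = inner ℝ (f i) (f j) := key
      _ = E i j := hfE



lemma skew_decomp {n : ℕ} {J : Matrix (Fin n) (Fin n) ℝ} (hJ : Jᵀ = -J) :
    J = (Matrix.of fun i j : Fin n => if i < j then -J i j else 0)ᵀ -
        (Matrix.of fun i j : Fin n => if i < j then -J i j else 0) := by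
  have hJ' : ∀ i j, J j i = -J i j := by
    intro i j
    have := congrFun (congrFun hJ i) j
    simpa using this
  funext i j
  simp only [Matrix.sub_apply, Matrix.transpose_apply, Matrix.of_apply]
  split_ifs with h1 h2 h2
  · exact absurd h2 (asymm h1)
  · have := hJ' j i
    linarith
  · have := hJ' i j
    linarith
  · have hij : i = j := le_antisymm (not_lt.1 h1) (not_lt.1 h2)
    subst hij
    have := hJ' i i
    linarith

end PHaux

/-- Converse of the pH parametrization: any matrices satisfying the pH
structural constraints arise from some parameter vector
`θ = (θE, θJ, θW, θB, θN)` (of total length `n(3n+1)/2 + 2nm + m²`). -/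


theorem pH_constraints_exists_parameters (n m : ℕ)
    (E J R : Matrix (Fin n) (Fin n) ℝ) (B P : Matrix (Fin n) (Fin m) ℝ)
    (S N : Matrix (Fin m) (Fin m) ℝ)
    (hE : E.PosSemidef) (hJ : Jᵀ = -J) (hN : Nᵀ = -N)
    (hW : (Matrix.fromBlocks R P Pᵀ S).PosSemidef) :
    ∃ (θE : Fin (n * (n + 1) / 2) → ℝ) (θJ : Fin (n * (n - 1) / 2) → ℝ)
      (θW : Fin ((n + m) * ((n + m) + 1) / 2) → ℝ)
      (θB : Fin (n * m) → ℝ) (θN : Fin (m * (m - 1) / 2) → ℝ),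
      E = (vtu n θE)ᵀ * vtu n θE ∧
      J = (vtsu n θJ)ᵀ - vtsu n θJ ∧
      (Matrix.fromBlocks R P Pᵀ S).submatrix finSumFinEquiv.symm finSumFinEquiv.symm
        = (vtu (n + m) θW)ᵀ * vtu (n + m) θW ∧
      B = vtf n m θB ∧
      N = (vtsu m θN)ᵀ - vtsu m θN := by
  classical
  obtain ⟨UE, hUE0, hUEfac⟩ := PHaux.psd_cholesky hE
  obtain ⟨θE, hθE⟩ := PHaux.vtu_surj n UE hUE0
  obtain ⟨θJ, hθJ⟩ := PHaux.vtsu_surj n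
    (Matrix.of fun i j : Fin n => if i < j then -J i j else 0)
    (fun i j h => by simp only [Matrix.of_apply, if_neg h])
  have hW' : ((Matrix.fromBlocks R P Pᵀ S).submatrix
      finSumFinEquiv.symm finSumFinEquiv.symm).PosSemidef :=
    hW.submatrix ⇑finSumFinEquiv.symm
  obtain ⟨UW, hUW0, hUWfac⟩ := PHaux.psd_cholesky hW'
  obtain ⟨θW, hθW⟩ := PHaux.vtu_surj (n + m) UW hUW0
  obtain ⟨θB, hθB⟩ := PHaux.vtf_surj n m B
  obtain ⟨θN, hθN⟩ := PHaux.vtsu_surj m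
    (Matrix.of fun i j : Fin m => if i < j then -N i j else 0)
    (fun i j h => by simp only [Matrix.of_apply, if_neg h])
  refine ⟨θE, θJ, θW, θB, θN, ?_, ?_, ?_, ?_, ?_⟩
  · rw [hθE]; exact hUEfac
  · rw [hθJ]; exact PHaux.skew_decomp hJ
  · rw [hθW]; exact hUWfac
  · exact hθB.symm
  · rw [hθN]; exact PHaux.skew_decomp hN
end

section
/- Let W = [[R, P], [P^T, S]] be a symmetric block matrix with R ∈ ℝ^(n×n), P ∈ ℝ^(n×m), S ∈ ℝ^(m×m). Then W ⪰ 0 if and only if R ⪰ 0, (I − R R⁺) P = 0, and S − P^T R⁺ P ⪰ 0, where R⁺ is the Moore–Penrose pseudoinverse of R. -/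
open Matrix Classical

/-- The Moore–Penrose pseudoinverse of a real square matrix, defined via the
four Penrose conditions (which have a unique solution for real matrices). -/

noncomputable def moorePenrose {n : ℕ} (R : Matrix (Fin n) (Fin n) ℝ) :
    Matrix (Fin n) (Fin n) ℝ :=
  if h : ∃ X : Matrix (Fin n) (Fin n) ℝ,
      R * X * R = R ∧ X * R * X = X ∧ (R * X)ᵀ = R * X ∧ (X * R)ᵀ = X * R then
    h.choose
  else 0

lemma conjT_eq {α β : Type*} (A : Matrix α β ℝ) : Aᴴ = Aᵀ := by
  ext i j; simp [conjTranspose_apply]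

lemma psd_real_iff {k : Type*} [Fintype k] (A : Matrix k k ℝ) :
    A.PosSemidef ↔ Aᵀ = A ∧ ∀ x, 0 ≤ x ⬝ᵥ (A *ᵥ x) := by
  rw [Matrix.posSemidef_iff_dotProduct_mulVec, Matrix.IsHermitian]
  rw [conjT_eq]
  refine and_congr Iff.rfl (forall_congr' fun x => ?_)
  have : star x = x := by funext i; exact star_trivial _
  rw [this]

lemma exists_penrose {n : ℕ} (R : Matrix (Fin n) (Fin n) ℝ) (hR : Rᵀ = R) :
    ∃ X : Matrix (Fin n) (Fin n) ℝ,
      R * X * R = R ∧ X * R * X = X ∧ (R * X)ᵀ = R * X ∧ (X * R)ᵀ = X * R := by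
  have hherm : R.IsHermitian := by rw [Matrix.IsHermitian, conjT_eq, hR]
  set U : Matrix (Fin n) (Fin n) ℝ := (hherm.eigenvectorUnitary : Matrix (Fin n) (Fin n) ℝ)
  have hU1 : U * star U = 1 := (Matrix.mem_unitaryGroup_iff).mp hherm.eigenvectorUnitary.2
  have hU2 : star U * U = 1 := (Matrix.mem_unitaryGroup_iff').mp hherm.eigenvectorUnitary.2
  set d : Fin n → ℝ := hherm.eigenvalues
  have hspec : R = U * diagonal d * star U := by
    have := hherm.spectral_theorem
    simpa [Function.comp] using this
  have conj_mul : ∀ A B : Matrix (Fin n) (Fin n) ℝ,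
      (U * A * star U) * (U * B * star U) = U * (A * B) * star U := by
    intro A B
    calc (U * A * star U) * (U * B * star U)
        = U * A * ((star U * U) * (B * star U)) := by simp only [Matrix.mul_assoc]
      _ = U * (A * B) * star U := by rw [hU2, one_mul]; simp only [Matrix.mul_assoc]
  have conj_symm : ∀ e : Fin n → ℝ, (U * diagonal e * star U)ᵀ = U * diagonal e * star U := by
    intro e
    have hstar : star U = Uᵀ := conjT_eq U
    rw [hstar, transpose_mul, transpose_mul, transpose_transpose, diagonal_transpose,
      Matrix.mul_assoc]
  have hfun1 : (fun i => d i * (d i)⁻¹ * d i) = d := by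
    funext i
    rcases eq_or_ne (d i) 0 with h | h
    · simp [h]
    · field_simp
  have hfun2 : (fun i => (d i)⁻¹ * d i * (d i)⁻¹) = fun i => (d i)⁻¹ := by
    funext i
    rcases eq_or_ne (d i) 0 with h | h
    · simp [h]
    · field_simp
  refine ⟨U * diagonal (fun i => (d i)⁻¹) * star U, ?_, ?_, ?_, ?_⟩
  · rw [hspec, conj_mul, conj_mul]
    simp only [diagonal_mul_diagonal]
    rw [hfun1]
  · rw [hspec, conj_mul, conj_mul]
    simp only [diagonal_mul_diagonal]
    rw [hfun2]
  · rw [hspec, conj_mul, diagonal_mul_diagonal]; exact conj_symm _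
  · rw [hspec, conj_mul, diagonal_mul_diagonal]; exact conj_symm _

lemma penrose_unique {n : ℕ} (A X Y : Matrix (Fin n) (Fin n) ℝ)
    (hX1 : A * X * A = A) (hX2 : X * A * X = X) (hX3 : (A * X)ᵀ = A * X)
    (hX4 : (X * A)ᵀ = X * A)
    (hY1 : A * Y * A = A) (hY2 : Y * A * Y = Y) (hY3 : (A * Y)ᵀ = A * Y)
    (hY4 : (Y * A)ᵀ = Y * A) : X = Y := by
  have e1 : X = X * Xᵀ * Aᵀ := by
    calc X = X * A * X := hX2.symm
      _ = X * (A * X) := by rw [Matrix.mul_assoc]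
      _ = X * (A * X)ᵀ := by rw [hX3]
      _ = X * (Xᵀ * Aᵀ) := by rw [transpose_mul]
      _ = X * Xᵀ * Aᵀ := by rw [Matrix.mul_assoc]
  have e2 : X = X * A * Y := by
    calc X = X * Xᵀ * Aᵀ := e1
      _ = X * Xᵀ * (A * Y * A)ᵀ := by rw [hY1]
      _ = X * Xᵀ * (Aᵀ * (A * Y)ᵀ) := by rw [transpose_mul]
      _ = X * Xᵀ * (Aᵀ * (A * Y)) := by rw [hY3]
      _ = X * Xᵀ * Aᵀ * (A * Y) := by simp only [Matrix.mul_assoc]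
      _ = X * (A * Y) := by rw [← e1]
      _ = X * A * Y := by rw [Matrix.mul_assoc]
  have f1 : Y = Aᵀ * Yᵀ * Y := by
    calc Y = Y * A * Y := hY2.symm
      _ = (Y * A)ᵀ * Y := by rw [hY4]
      _ = Aᵀ * Yᵀ * Y := by rw [transpose_mul]
  have hAt : X * A * Aᵀ = Aᵀ := by
    have h := congrArg Matrix.transpose hX1
    calc X * A * Aᵀ = (X * A)ᵀ * Aᵀ := by rw [hX4]
      _ = (A * (X * A))ᵀ := by simp only [transpose_mul, Matrix.mul_assoc]
      _ = (A * X * A)ᵀ := by rw [Matrix.mul_assoc]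
      _ = Aᵀ := h
  have f2 : Y = X * A * Y := by
    calc Y = Aᵀ * Yᵀ * Y := f1
      _ = X * A * Aᵀ * Yᵀ * Y := by rw [hAt]
      _ = X * A * (Aᵀ * Yᵀ) * Y := by rw [Matrix.mul_assoc (X * A)]
      _ = X * A * (Y * A)ᵀ * Y := by rw [transpose_mul]
      _ = X * A * (Y * A) * Y := by rw [hY4]
      _ = X * A * (Y * A * Y) := by rw [Matrix.mul_assoc, Matrix.mul_assoc, Matrix.mul_assoc]
      _ = X * A * Y := by rw [hY2]
  rw [e2, ← f2]

lemma moorePenrose_spec {n : ℕ} (R : Matrix (Fin n) (Fin n) ℝ) (hR : Rᵀ = R) :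
    R * moorePenrose R * R = R ∧ moorePenrose R * R * moorePenrose R = moorePenrose R ∧
      (R * moorePenrose R)ᵀ = R * moorePenrose R ∧
      (moorePenrose R * R)ᵀ = moorePenrose R * R := by
  have h := exists_penrose R hR
  rw [moorePenrose, dif_pos h]
  exact h.choose_spec

lemma moorePenrose_transpose {n : ℕ} (R : Matrix (Fin n) (Fin n) ℝ) (hR : Rᵀ = R) :
    (moorePenrose R)ᵀ = moorePenrose R := by
  obtain ⟨h1, h2, h3, h4⟩ := moorePenrose_spec R hR
  set M := moorePenrose R
  have hMR : M * R = R * Mᵀ := by rw [← h4, transpose_mul, hR]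
  have hRM : R * M = Mᵀ * R := by rw [← h3, transpose_mul, hR]
  refine penrose_unique R Mᵀ M ?_ ?_ ?_ ?_ h1 h2 h3 h4
  · calc R * Mᵀ * R = R * (Mᵀ * Rᵀ) := by rw [hR, Matrix.mul_assoc]
      _ = Rᵀ * (R * M)ᵀ := by rw [transpose_mul, hR]
      _ = (R * M * R)ᵀ := by rw [← transpose_mul]
      _ = R := by rw [h1, hR]
  · calc Mᵀ * R * Mᵀ = Mᵀ * (Rᵀ * Mᵀ) := by rw [hR, Matrix.mul_assoc]
      _ = Mᵀ * (M * R)ᵀ := by rw [transpose_mul]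
      _ = (M * R * M)ᵀ := by rw [← transpose_mul]
      _ = Mᵀ := by rw [h2]
  · calc (R * Mᵀ)ᵀ = (M * R)ᵀ := by rw [← hMR]
      _ = M * R := h4
      _ = R * Mᵀ := hMR
  · calc (Mᵀ * R)ᵀ = (R * M)ᵀ := by rw [← hRM]
      _ = R * M := h3
      _ = Mᵀ * R := hRM
lemma dp_lemma {α β γ : Type*} [Fintype α] [Fintype β] [Fintype γ]
    (x : α → ℝ) (C : Matrix β α ℝ) (B : Matrix β γ ℝ) (v : γ → ℝ) :
    (C *ᵥ x) ⬝ᵥ (B *ᵥ v) = x ⬝ᵥ ((Cᵀ * B) *ᵥ v) := by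
  calc (C *ᵥ x) ⬝ᵥ (B *ᵥ v) = ((C *ᵥ x) ᵥ* B) ⬝ᵥ v := dotProduct_mulVec _ _ _
    _ = ((x ᵥ* Cᵀ) ᵥ* B) ⬝ᵥ v := by rw [← vecMul_transpose]
    _ = (x ᵥ* (Cᵀ * B)) ⬝ᵥ v := by rw [vecMul_vecMul]
    _ = x ⬝ᵥ ((Cᵀ * B) *ᵥ v) := (dotProduct_mulVec _ _ _).symm

lemma dp_self_nonneg {α : Type*} [Fintype α] (w : α → ℝ) : 0 ≤ w ⬝ᵥ w :=
  Finset.sum_nonneg fun i _ => mul_self_nonneg (w i)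

lemma psd_fromBlocks_diag {k l : Type*} [Fintype k] [Fintype l]
    (A : Matrix k k ℝ) (B : Matrix l l ℝ) (hA : A.PosSemidef) (hB : B.PosSemidef) :
    (fromBlocks A 0 0 B).PosSemidef := by
  rw [psd_real_iff] at hA hB ⊢
  constructor
  · rw [fromBlocks_transpose, transpose_zero, transpose_zero, hA.1, hB.1]
  · intro x
    have hx : x = Sum.elim (x ∘ Sum.inl) (x ∘ Sum.inr) := (Sum.elim_comp_inl_inr x).symm
    rw [hx, fromBlocks_mulVec, sumElim_dotProduct_sumElim]
    simp only [Matrix.zero_mulVec, add_zero, zero_add]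
    exact add_nonneg (hA.2 _) (hB.2 _)

/-- Generalized Schur complement characterization: for a symmetric block matrix
`W = [[R, P], [Pᵀ, S]]`, we have `W ⪰ 0` iff `R ⪰ 0`, `(I − R R⁺) P = 0`, and
`S − Pᵀ R⁺ P ⪰ 0`. -/
theorem posSemidef_blockMatrix_iff_schur (n m : ℕ)
    (R : Matrix (Fin n) (Fin n) ℝ) (P : Matrix (Fin n) (Fin m) ℝ)
    (S : Matrix (Fin m) (Fin m) ℝ) (hR : Rᵀ = R) (hS : Sᵀ = S) :
    (Matrix.fromBlocks R P Pᵀ S).PosSemidef ↔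
      R.PosSemidef ∧ (1 - R * moorePenrose R) * P = 0 ∧
        (S - Pᵀ * moorePenrose R * P).PosSemidef := by
  obtain ⟨hM1, hM2, hM3, hM4⟩ := moorePenrose_spec R hR
  have hMt := moorePenrose_transpose R hR
  set M := moorePenrose R with hMdef
  clear_value M
  constructor
  · intro hW
    rw [psd_real_iff] at hW
    have key : ∀ (u : Fin n → ℝ) (v : Fin m → ℝ),
        0 ≤ u ⬝ᵥ (R *ᵥ u) + u ⬝ᵥ (P *ᵥ v) + (v ⬝ᵥ (Pᵀ *ᵥ u) + v ⬝ᵥ (S *ᵥ v)) := by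
      intro u v
      have h := hW.2 (Sum.elim u v)
      rwa [fromBlocks_mulVec, sumElim_dotProduct_sumElim, dotProduct_add, dotProduct_add]
        at h
    have hRps : R.PosSemidef := by
      rw [psd_real_iff]
      refine ⟨hR, fun u => ?_⟩
      have h := key u 0
      simpa using h
    set N : Matrix (Fin n) (Fin n) ℝ := 1 - R * M with hNdef
    clear_value N
    have hNR : N * R = 0 := by rw [hNdef, sub_mul, one_mul, hM1, sub_self]
    have hNt : Nᵀ = N := by rw [hNdef, transpose_sub, transpose_one, hM3]
    have hRN : R * N = 0 := by
      have h := congrArg Matrix.transpose hNR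
      rwa [transpose_mul, hNt, hR, transpose_zero] at h
    have hNN : N * N = N := by
      have h5 : R * M * (R * M) = R * M := by rw [← Matrix.mul_assoc, hM1]
      calc N * N = 1 - R * M - R * M + R * M * (R * M) := by rw [hNdef]; noncomm_ring
        _ = 1 - R * M - R * M + R * M := by rw [h5]
        _ = N := by rw [hNdef]; noncomm_ring
    set Q := N * P with hQdef
    clear_value Q
    have hRQ : R * Q = 0 := by rw [hQdef, ← Matrix.mul_assoc, hRN, Matrix.zero_mul]
    have hNNP : N * (N * P) = N * P := by rw [← Matrix.mul_assoc, hNN]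
    have hPtQ : Pᵀ * Q = Qᵀ * Q := by
      rw [hQdef, transpose_mul, hNt, Matrix.mul_assoc, hNNP]
    have hQtP : Qᵀ * P = Qᵀ * Q := by
      have h := congrArg Matrix.transpose hPtQ
      rwa [transpose_mul, transpose_mul, transpose_transpose, transpose_transpose] at h
    have hQv : ∀ v : Fin m → ℝ, Q *ᵥ v = 0 := by
      intro v
      set c := v ⬝ᵥ ((Qᵀ * Q) *ᵥ v) with hc
      have hcq : (Q *ᵥ v) ⬝ᵥ (Q *ᵥ v) = c := dp_lemma v Q Q v
      have hcnn : 0 ≤ c := by rw [← hcq]; exact dp_self_nonneg _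
      have hlin : ∀ t : ℝ, 0 ≤ t * c + (t * c + v ⬝ᵥ (S *ᵥ v)) := by
        intro t
        have h := key (t • (Q *ᵥ v)) v
        have e1 : (t • (Q *ᵥ v)) ⬝ᵥ (R *ᵥ (t • (Q *ᵥ v))) = 0 := by
          rw [mulVec_smul, mulVec_mulVec, hRQ, Matrix.zero_mulVec, smul_zero,
            dotProduct_zero]
        have e2 : (t • (Q *ᵥ v)) ⬝ᵥ (P *ᵥ v) = t * c := by
          rw [smul_dotProduct, dp_lemma, hQtP, ← hc, smul_eq_mul]
        have e3 : v ⬝ᵥ (Pᵀ *ᵥ (t • (Q *ᵥ v))) = t * c := by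
          rw [mulVec_smul, mulVec_mulVec, dotProduct_smul, hPtQ, ← hc, smul_eq_mul]
        rwa [e1, e2, e3, zero_add] at h
      have hc0 : c = 0 := by
        by_contra hcne
        have hcpos : 0 < c := lt_of_le_of_ne hcnn (Ne.symm hcne)
        have h := hlin ((-(v ⬝ᵥ (S *ᵥ v)) - 1) / (2 * c))
        have h2 : (-(v ⬝ᵥ (S *ᵥ v)) - 1) / (2 * c) * c
            = (-(v ⬝ᵥ (S *ᵥ v)) - 1) / 2 := by
          field_simp
        rw [h2] at h
        linarith
      rw [← hcq] at hc0
      exact dotProduct_self_eq_zero.mp hc0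
    have hQzero : Q = 0 := by
      ext i j
      have h := congrFun (hQv (Pi.single j 1)) i
      simpa [mulVec_single] using h
    refine ⟨hRps, hQzero, ?_⟩
    rw [psd_real_iff]
    constructor
    · simp only [transpose_sub, transpose_mul, transpose_transpose, hS, hMt,
        Matrix.mul_assoc]
    · intro v
      have hKRK : (M * P)ᵀ * (R * (M * P)) = Pᵀ * M * P := by
        have h6 : M * (R * (M * P)) = M * P := by
          calc M * (R * (M * P)) = M * R * M * P := by simp only [Matrix.mul_assoc]
            _ = M * P := by rw [hM2]
        rw [transpose_mul, hMt, Matrix.mul_assoc, h6, ← Matrix.mul_assoc]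
      have hKtP : (M * P)ᵀ * P = Pᵀ * M * P := by rw [transpose_mul, hMt]
      have hPtK : Pᵀ * (M * P) = Pᵀ * M * P := (Matrix.mul_assoc _ _ _).symm
      have h := key (-((M * P) *ᵥ v)) v
      have hA : (-((M * P) *ᵥ v)) ⬝ᵥ (R *ᵥ (-((M * P) *ᵥ v)))
          = v ⬝ᵥ ((Pᵀ * M * P) *ᵥ v) := by
        rw [neg_dotProduct, mulVec_neg, dotProduct_neg, neg_neg, mulVec_mulVec,
          dp_lemma, hKRK]
      have hB : (-((M * P) *ᵥ v)) ⬝ᵥ (P *ᵥ v) = -(v ⬝ᵥ ((Pᵀ * M * P) *ᵥ v)) := by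
        rw [neg_dotProduct, dp_lemma, hKtP]
      have hC : v ⬝ᵥ (Pᵀ *ᵥ (-((M * P) *ᵥ v))) = -(v ⬝ᵥ ((Pᵀ * M * P) *ᵥ v)) := by
        rw [mulVec_neg, dotProduct_neg, mulVec_mulVec, hPtK]
      rw [hA, hB, hC] at h
      rw [sub_mulVec, dotProduct_sub]
      linarith
  · rintro ⟨hRps, hNP, hS'⟩
    have hP : R * M * P = P := by
      have h := hNP
      rw [Matrix.sub_mul, Matrix.one_mul, sub_eq_zero] at h
      exact h.symm
    have hPt : Pᵀ * M * R = Pᵀ := by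
      have h := congrArg Matrix.transpose hP
      rw [transpose_mul, transpose_mul, hMt, hR] at h
      rwa [← Matrix.mul_assoc] at h
    have hfact : fromBlocks R P Pᵀ S =
        (fromBlocks 1 0 (Pᵀ * M) 1) * (fromBlocks R 0 0 (S - Pᵀ * M * P)) *
          (fromBlocks 1 0 (Pᵀ * M) 1)ᴴ := by
      rw [conjT_eq, fromBlocks_transpose, transpose_one, transpose_one, transpose_zero,
        transpose_mul, transpose_transpose, hMt]
      rw [fromBlocks_multiply, fromBlocks_multiply]
      simp only [Matrix.one_mul, Matrix.mul_one, Matrix.zero_mul, Matrix.mul_zero,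
        add_zero, zero_add, ← Matrix.mul_assoc]
      rw [hPt, hP]
      have h7 : Pᵀ * M * P + (S - Pᵀ * M * P) = S := by abel
      rw [h7]
    rw [hfact]
    exact (psd_fromBlocks_diag _ _ hRps hS').mul_mul_conjTranspose_same _
end

section
/- Let H_pH(s, θ) = (B+P)^T (sE − (J−R))^{-1} (B−P) + (S+N) be the transfer function of a pH system with matrices depending on parameters as in the parametrization. For a purely imaginary s = iω (ω ∈ ℝ) at which D(s) := sE − (J−R) is invertible, the matrix Φ(s) := H_pH(−s)^T + H_pH(s) satisfies z^H Φ(iω) z ≥ 0 for all z ∈ ℂ^m, i.e., Φ is positive semidefinite on the imaginary axis wherever defined. -/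
open Matrix Complex
open scoped ComplexOrder

private lemma star_dot_mulVec {k l : Type*} [Fintype k] [Fintype l]
    (A : Matrix k l ℂ) (v : k → ℂ) (w : l → ℂ) :
    star (star v ⬝ᵥ (A *ᵥ w)) = star w ⬝ᵥ (Aᴴ *ᵥ v) := by
  calc star (star v ⬝ᵥ (A *ᵥ w)) = star (A *ᵥ w) ⬝ᵥ v := by
        rw [Matrix.star_dotProduct, star_star]
    _ = (star w ᵥ* Aᴴ) ⬝ᵥ v := by rw [Matrix.star_mulVec]
    _ = star w ⬝ᵥ (Aᴴ *ᵥ v) := (Matrix.dotProduct_mulVec _ _ _).symm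

private lemma conjT_map {k l : Type*} (A : Matrix k l ℝ) :
    (A.map Complex.ofReal)ᴴ = Aᵀ.map Complex.ofReal := by
  ext i j
  simp [Matrix.conjTranspose_apply, Complex.conj_ofReal]

private lemma posSemidef_map {k : Type*} [Fintype k] [DecidableEq k] {W : Matrix k k ℝ}
    (hW : W.PosSemidef) : (W.map Complex.ofReal).PosSemidef := by
  obtain ⟨A, rfl⟩ : ∃ A : Matrix k k ℝ, W = Aᴴ * A := by
    open scoped MatrixOrder in exact CStarAlgebra.nonneg_iff_eq_star_mul_self.mp hW.nonneg
  have : (Aᴴ * A).map Complex.ofReal =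
      (A.map Complex.ofReal)ᴴ * (A.map Complex.ofReal) := by
    ext i j
    simp [Matrix.mul_apply, Matrix.conjTranspose_apply, Complex.conj_ofReal]
  rw [this]
  exact Matrix.posSemidef_conjTranspose_mul_self _

private lemma real_mulVec_star {k l : Type*} [Fintype l] (A : Matrix k l ℝ) (z : l → ℂ) :
    (A.map Complex.ofReal) *ᵥ star z = star ((A.map Complex.ofReal) *ᵥ z) := by
  rw [Matrix.star_mulVec, conjT_map, Matrix.transpose_map, Matrix.vecMul_transpose]

/-- The transfer function `H(s) = (B+P)ᵀ (sE − J + R)⁻¹ (B−P) + S + N` of a pH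
system, viewed as a complex matrix. -/
noncomputable def pHTransfer (n m : ℕ) (E J R : Matrix (Fin n) (Fin n) ℝ)
    (B P : Matrix (Fin n) (Fin m) ℝ) (S N : Matrix (Fin m) (Fin m) ℝ) (s : ℂ) :
    Matrix (Fin m) (Fin m) ℂ :=
  ((B + P)ᵀ).map (Complex.ofReal) *
      (s • E.map (Complex.ofReal) -
        (J.map (Complex.ofReal) - R.map (Complex.ofReal)))⁻¹ *
    ((B - P).map (Complex.ofReal)) + (S + N).map (Complex.ofReal)

/-- Positive realness of the pH transfer function on the imaginary axis: for
`s = iω` at which `D(s) = sE − (J−R)` is invertible,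
`Φ(s) = H(−s)ᵀ + H(s)` satisfies `zᴴ Φ(iω) z ≥ 0` for all `z ∈ ℂᵐ`. -/
theorem pH_transfer_positive_real (n m : ℕ)
    (E J R : Matrix (Fin n) (Fin n) ℝ) (B P : Matrix (Fin n) (Fin m) ℝ)
    (S N : Matrix (Fin m) (Fin m) ℝ)
    (hE : E.PosSemidef) (hJ : Jᵀ = -J) (hN : Nᵀ = -N)
    (hW : (Matrix.fromBlocks R P Pᵀ S).PosSemidef)
    (ω : ℝ)
    (hD : IsUnit ((Complex.I * (ω : ℂ)) • E.map (Complex.ofReal) -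
      (J.map (Complex.ofReal) - R.map (Complex.ofReal))).det) :
    ∀ z : Fin m → ℂ,
      0 ≤ star z ⬝ᵥ
        (((pHTransfer n m E J R B P S N (-(Complex.I * (ω : ℂ))))ᵀ +
          pHTransfer n m E J R B P S N (Complex.I * (ω : ℂ))).mulVec z) := by
  intro z
  classical
  set s : ℂ := Complex.I * (ω : ℂ) with hs
  set E' := E.map Complex.ofReal with hE'
  set J' := J.map Complex.ofReal with hJ'
  set R' := R.map Complex.ofReal with hR'
  set P' := P.map Complex.ofReal with hP'
  set S' := S.map Complex.ofReal with hS'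
  set N' := N.map Complex.ofReal with hN'
  set BmP := (B - P).map Complex.ofReal with hBmP
  set BpPt := ((B + P)ᵀ).map Complex.ofReal with hBpPt
  set Dc := s • E' - (J' - R') with hDcdef
  set M := BpPt * Dc⁻¹ * BmP with hM
  -- symmetries
  have hEs : Eᵀ = E := by
    ext i j; exact congrFun (congrFun hE.1 i) j
  have hRS : Rᵀ = R := by
    ext i j
    have := congrFun (congrFun hW.1 (Sum.inl i)) (Sum.inl j)
    simpa [Matrix.conjTranspose_apply] using this
  have hSS : Sᵀ = S := by
    ext i j
    have := congrFun (congrFun hW.1 (Sum.inr i)) (Sum.inr j)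
    simpa [Matrix.conjTranspose_apply] using this
  have hsstar : star s = -s := by
    simp [hs, Complex.conj_ofReal, mul_comm]
  -- conjugate transpose of Dc
  have hJ'neg : J'ᵀ = -J' := by
    rw [hJ', ← Matrix.transpose_map, hJ]; ext i j; simp
  have hE'symm : E'ᵀ = E' := by rw [hE', ← Matrix.transpose_map, hEs]
  have hR'symm : R'ᵀ = R' := by rw [hR', ← Matrix.transpose_map, hRS]
  have hS'symm : S'ᵀ = S' := by rw [hS', ← Matrix.transpose_map, hSS]
  have hDcH : Dcᴴ = (-s) • E' + (J' + R') := by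
    rw [hDcdef, Matrix.conjTranspose_sub, Matrix.conjTranspose_smul,
      Matrix.conjTranspose_sub, hE', hJ', hR', conjT_map, conjT_map, conjT_map,
      hEs, hJ, hRS, hsstar]
    have hmapJ : (-J).map Complex.ofReal = -(J.map Complex.ofReal) := by
      ext i j; simp
    rw [hmapJ, ← hE', ← hJ', ← hR']
    module
  have hDmT : ((-s) • E' - (J' - R'))ᵀ = Dcᴴ := by
    rw [Matrix.transpose_sub, Matrix.transpose_smul, Matrix.transpose_sub,
      hE'symm, hJ'neg, hR'symm, hDcH]
    module
  have hDD : Dcᴴ + Dc = R' + R' := by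
    rw [hDcH, hDcdef]; module
  -- decompose the transposed transfer function
  have hMH : Mᴴ = BmPᵀ * ((Dc⁻¹)ᴴ * BpPtᵀ) := by
    rw [hM, Matrix.conjTranspose_mul, Matrix.conjTranspose_mul,
      hBmP, hBpPt, conjT_map, conjT_map, Matrix.transpose_map, Matrix.transpose_map]
  have h1 : (pHTransfer n m E J R B P S N (-s))ᵀ = Mᴴ + (S' - N') := by
    rw [hMH]
    simp only [pHTransfer, ← hE', ← hJ', ← hR', ← hBmP, ← hBpPt]
    rw [Matrix.transpose_add, Matrix.transpose_mul, Matrix.transpose_mul,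
      Matrix.transpose_nonsing_inv, hDmT, ← Matrix.conjTranspose_nonsing_inv]
    congr 1
    ext i j
    simp [hS', hN', Matrix.transpose_apply]
    rw [← Matrix.transpose_apply S j i, ← Matrix.transpose_apply N j i, hSS, hN]
    simp
  have h2 : pHTransfer n m E J R B P S N s = M + (S' + N') := by
    simp only [pHTransfer, ← hE', ← hJ', ← hR', ← hBmP, ← hBpPt, ← hDcdef, ← hM]
    congr 1
    ext i j
    simp [hS', hN']
  -- the vector x
  set x := Dc⁻¹ *ᵥ (BmP *ᵥ z) with hxdef
  have hx : Dc *ᵥ x = BmP *ᵥ z := by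
    rw [hxdef, Matrix.mulVec_mulVec, Matrix.mulVec_mulVec,
      Matrix.mul_nonsing_inv _ hD, Matrix.one_mul]
  -- split BpPt
  have hsplit : BpPt = BmPᵀ + (P'ᵀ + P'ᵀ) := by
    rw [hBpPt, hBmP, hP']
    ext i j
    simp [Matrix.transpose_apply, Matrix.map_apply]
  -- scalar computations
  have hq : star z ⬝ᵥ (M *ᵥ z) =
      star x ⬝ᵥ (Dcᴴ *ᵥ x) + (star z ⬝ᵥ (P'ᵀ *ᵥ x) + star z ⬝ᵥ (P'ᵀ *ᵥ x)) := by
    rw [hM, ← Matrix.mulVec_mulVec, ← Matrix.mulVec_mulVec, ← hxdef, hsplit,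
      Matrix.add_mulVec, Matrix.add_mulVec, dotProduct_add, dotProduct_add]
    congr 1
    rw [Matrix.dotProduct_mulVec, Matrix.vecMul_transpose, hBmP,
      real_mulVec_star, ← hBmP, ← hx, Matrix.star_mulVec,
      ← Matrix.dotProduct_mulVec]
  have hP'TH : (P'ᵀ)ᴴ = P' := by
    ext i j
    simp [hP', Matrix.conjTranspose_apply, Complex.conj_ofReal]
  have hqbar : star z ⬝ᵥ (Mᴴ *ᵥ z) =
      star x ⬝ᵥ (Dc *ᵥ x) + (star x ⬝ᵥ (P' *ᵥ z) + star x ⬝ᵥ (P' *ᵥ z)) := by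
    rw [← star_dot_mulVec, hq]
    rw [star_add, star_add, star_dot_mulVec, star_dot_mulVec,
      Matrix.conjTranspose_conjTranspose, hP'TH]
  -- positivity from W
  have hW' := posSemidef_map hW
  set v : (Fin n ⊕ Fin m) → ℂ := Sum.elim x z with hv
  have ht := hW'.dotProduct_mulVec_nonneg v
  have hstarv : star v = Sum.elim (star x) (star z) := by
    funext i; cases i <;> rfl
  have hteq : star v ⬝ᵥ ((Matrix.fromBlocks R P Pᵀ S).map Complex.ofReal *ᵥ v) =
      (star x ⬝ᵥ (R' *ᵥ x) + star x ⬝ᵥ (P' *ᵥ z)) +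
        (star z ⬝ᵥ (P'ᵀ *ᵥ x) + star z ⬝ᵥ (S' *ᵥ z)) := by
    rw [Matrix.fromBlocks_map, Matrix.fromBlocks_mulVec, hv, hstarv,
      sumElim_dotProduct_sumElim, Sum.elim_comp_inl, Sum.elim_comp_inr,
      dotProduct_add, dotProduct_add, ← hR', ← hP', ← hS',
      hP', Matrix.transpose_map, ← hP']
  -- assemble
  rw [h1, h2]
  have key : star z ⬝ᵥ ((Mᴴ + (S' - N') + (M + (S' + N'))) *ᵥ z) =
      star v ⬝ᵥ ((Matrix.fromBlocks R P Pᵀ S).map Complex.ofReal *ᵥ v) +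
      star v ⬝ᵥ ((Matrix.fromBlocks R P Pᵀ S).map Complex.ofReal *ᵥ v) := by
    have hxDD : star x ⬝ᵥ (Dcᴴ *ᵥ x) + star x ⬝ᵥ (Dc *ᵥ x) =
        star x ⬝ᵥ (R' *ᵥ x) + star x ⬝ᵥ (R' *ᵥ x) := by
      rw [← dotProduct_add, ← Matrix.add_mulVec, hDD, Matrix.add_mulVec,
        dotProduct_add]
    simp only [Matrix.add_mulVec, Matrix.sub_mulVec, dotProduct_add,
      dotProduct_sub]
    rw [hteq]
    linear_combination hq + hqbar + hxDD
  rw [key]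
  exact add_nonneg ht ht
end
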